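/- In the non-imitable model of Figure 2b, the observational reward satisfies P(Y = true) = 1, yet for every probability mass function pi on Bool, drawing X' from pi independently of U and setting W' := X' and Y' := U XOR (NOT W') yields P(Y' = true) = 1/2. Hence no policy pi attains the observational distribution of Y. -/

import Mathlib

/-!
Figure 2b model: `U` uniform on `Bool`, `X := U`, `W := X`, `Y := U XOR (NOT W)`.
An intervention `do(π)` replaces `X` by an independent draw `X' ~ π` and propagates:
`W' := X'`, `Y' := U XOR (NOT W')`.
STATEMENT 2: `P(Y = true) = 1`, yet for every PMF `π` on `Bool`, `P(Y' = true) = 1/2`;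
hence no policy attains the observational distribution of `Y`.
-/

open scoped ENNReal

/-- Law of the exogenous variable `U`: a uniform bit. -/
noncomputable def fig2bU : PMF Bool := PMF.bernoulli (1 / 2) (by norm_num)

/-- Observational law of `Y` where `X := U`, `W := X`, `Y := U XOR (NOT W)`. -/
noncomputable def fig2bY : PMF Bool := fig2bU.map fun u => xor u (!u)

/-- Law of `Y'` under `do(π)`: `X' ~ π` independent of `U`, `W' := X'`,
`Y' := U XOR (NOT W')`. -/
noncomputable def fig2bYdo (π : PMF Bool) : PMF Bool :=
  fig2bU.bind fun u => π.map fun x' => xor u (!x')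

lemma fig2bY_true : fig2bY true = 1 := by
  simp [fig2bY, fig2bU, PMF.map_apply, PMF.bernoulli, tsum_bool]
  exact ENNReal.mul_inv_cancel (by norm_num) (by norm_num)

lemma fig2bYdo_true (π : PMF Bool) : fig2bYdo π true = 1 / 2 := by
  have h := PMF.tsum_coe π
  rw [tsum_bool] at h
  simp [fig2bYdo, fig2bU, PMF.bind_apply, PMF.map_apply, PMF.bernoulli, tsum_bool]
  rw [← mul_add, add_comm, h, mul_one]

theorem fig2b_not_imitable :
    fig2bY true = 1 ∧
    (∀ π : PMF Bool, fig2bYdo π true = 1 / 2) ∧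
    (∀ π : PMF Bool, fig2bYdo π ≠ fig2bY) := by
  refine ⟨fig2bY_true, fig2bYdo_true, fun π h => ?_⟩
  have := congrArg (fun p : PMF Bool => p true) h
  rw [fig2bYdo_true, fig2bY_true] at this
  exact absurd this (by norm_num)
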